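/- arXiv:2103.03787 — 4 statements merged into one kernel-verified Lean document; each statement's English description precedes it below -/
import Mathlib

section
/- Let X̃ ⊆ X be a subspace invariant under σ'(ξ,v) for every (ξ,v) ∈ 𝔰, and let K̃ : X̃ × X̃* → 𝔰* be the momentum map of the restricted representation, ⟨K̃(x̃,ã),(ξ,v)⟩ = ⟨ã, σ'(ξ,v)x̃⟩. Let U : X* → ℝ and Ũ : X̃* → ℝ be differentiable. Let (ξ,v) : I → 𝔰, a : I → X*, ã : I → X̃*, u : I → 𝔰* be curves on a real interval I such that t ↦ A(ξ(t),v(t)) is differentiable. Then: (i) if u(t) = K(δU/δa(a(t)), a(t)) − K̃(δŨ/δã(ã(t)), ã(t)), then at every t the controlled Euler–Poincaré momentum equation d/dt[A(ξ,v)] = ad*_{(ξ,v)}A(ξ,v) − K(δU/δa(a), a) + u(t) holds if and only if the matched Euler–Poincaré momentum equation d/dt[A(ξ,v)] = ad*_{(ξ,v)}A(ξ,v) − K̃(δŨ/δã(ã), ã) holds; (ii) conversely, if both equations hold at some t, then u(t) = K(δU/δa(a(t)), a(t)) − K̃(δŨ/δã(ã(t)), ã(t)). -/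
open NormedSpace

/-- **Matching via Subrepresentation** (Theorem in Section 4.2 of the paper).
`G` plays the role of the Lie algebra 𝔤, `V` of the vector space on which it acts via `ρ'`,
so that `G × V` is the semidirect product Lie algebra 𝔰 with bracket `br`.  `σ'` is a
representation of 𝔰 on `X` with momentum map `K`, `X'` is a `σ'`-invariant subspace with
restricted momentum map `K'`, `A` is the flat map of the kinetic-energy metric, `U`, `U'`
are the potentials with functional derivatives `DU`, `DU'`, and `adStar` is the coadjoint
action of 𝔰 on its dual. -/
theorem matching_via_subrepresentation
    {G V X : Type*}
    [NormedAddCommGroup G] [NormedSpace ℝ G] [FiniteDimensional ℝ G]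
    [LieRing G] [LieAlgebra ℝ G]
    [NormedAddCommGroup V] [NormedSpace ℝ V] [FiniteDimensional ℝ V]
    [NormedAddCommGroup X] [NormedSpace ℝ X] [FiniteDimensional ℝ X]
    -- ρ' : 𝔤 → End(V) is a Lie algebra homomorphism
    (ρ' : G →ₗ[ℝ] V →ₗ[ℝ] V)
    (hρ' : ∀ ξ η : G, ρ' ⁅ξ, η⁆ = ρ' ξ ∘ₗ ρ' η - ρ' η ∘ₗ ρ' ξ)
    -- the semidirect product bracket on 𝔰 = 𝔤 ⋉ V
    (br : (G × V) → (G × V) → (G × V))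
    (hbr : ∀ s₁ s₂ : G × V, br s₁ s₂ = (⁅s₁.1, s₂.1⁆, ρ' s₁.1 s₂.2 - ρ' s₂.1 s₁.2))
    -- the coadjoint action ⟨ad*_{(ξ,v)}μ, (η,w)⟩ = ⟨μ, [(ξ,v),(η,w)]⟩
    (adStar : (G × V) → StrongDual ℝ (G × V) → StrongDual ℝ (G × V))
    (hadStar : ∀ s μ t, adStar s μ t = μ (br s t))
    -- σ' : 𝔰 → End(X) is a Lie algebra homomorphism
    (σ' : (G × V) →ₗ[ℝ] X →ₗ[ℝ] X)
    (hσ' : ∀ s₁ s₂ : G × V, σ' (br s₁ s₂) = σ' s₁ ∘ₗ σ' s₂ - σ' s₂ ∘ₗ σ' s₁)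
    -- its momentum map K, ⟨K(x,a),(ξ,v)⟩ = ⟨a, σ'(ξ,v)x⟩
    (K : X → StrongDual ℝ X → StrongDual ℝ (G × V))
    (hK : ∀ x a s, K x a s = a (σ' s x))
    -- X̃ ⊆ X is an invariant subspace, with restricted momentum map K̃
    (X' : Submodule ℝ X)
    (hinv : ∀ s : G × V, ∀ x ∈ X', σ' s x ∈ X')
    (K' : X' → StrongDual ℝ X' → StrongDual ℝ (G × V))
    (hK' : ∀ (x : X') (a : StrongDual ℝ X') (s : G × V),
      K' x a s = a ⟨σ' s x, hinv s x x.2⟩)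
    -- the flat map of the left-invariant kinetic-energy metric
    (A : (G × V) →ₗ[ℝ] StrongDual ℝ (G × V))
    -- potentials and their functional derivatives, dU(a)(δa') = ⟨δa', δU/δa(a)⟩
    (U : StrongDual ℝ X → ℝ) (DU : StrongDual ℝ X → X)
    (hU : ∀ a, HasFDerivAt U (inclusionInDoubleDual ℝ X (DU a)) a)
    (U' : StrongDual ℝ X' → ℝ) (DU' : StrongDual ℝ X' → X')
    (hU' : ∀ a, HasFDerivAt U' (inclusionInDoubleDual ℝ X' (DU' a)) a)
    -- curves on a real interval I
    (I : Set ℝ) (hI : I.OrdConnected)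
    (ξv : ℝ → G × V) (a : ℝ → StrongDual ℝ X) (a' : ℝ → StrongDual ℝ X')
    (u : ℝ → StrongDual ℝ (G × V)) (dA : ℝ → StrongDual ℝ (G × V))
    (hdA : ∀ t ∈ I, HasDerivAt (fun τ => A (ξv τ)) (dA t) t) :
    -- (i): under the matching control, the controlled EP momentum equation holds
    --      iff the matched EP momentum equation holds
    ((∀ t ∈ I, u t = K (DU (a t)) (a t) - K' (DU' (a' t)) (a' t)) →
      ∀ t ∈ I,
        (dA t = adStar (ξv t) (A (ξv t)) - K (DU (a t)) (a t) + u t ↔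
          dA t = adStar (ξv t) (A (ξv t)) - K' (DU' (a' t)) (a' t)))
    ∧
    -- (ii): conversely, if both equations hold at some t, the control is the matching one
    (∀ t ∈ I,
      dA t = adStar (ξv t) (A (ξv t)) - K (DU (a t)) (a t) + u t →
      dA t = adStar (ξv t) (A (ξv t)) - K' (DU' (a' t)) (a' t) →
      u t = K (DU (a t)) (a t) - K' (DU' (a' t)) (a' t)) := by
  constructor
  · intro h t ht
    rw [h t ht]
    constructor <;> intro he <;> rw [he] <;> abel
  · intro t ht h1 h2
    rw [h2] at h1
    linear_combination (norm := abel) -h1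
end

section
/- Let τ' : 𝔰 → End(Y) be a Lie algebra homomorphism into the endomorphisms of a finite-dimensional real vector space Y, with momentum map M : Y × Y* → 𝔰*, ⟨M(y,b),(ξ,v)⟩ = ⟨b, τ'(ξ,v)y⟩. Let U : X* → ℝ and Ũ : X* × Y* → ℝ be differentiable, with partial functional derivatives δŨ/δa(a,b) ∈ X and δŨ/δb(a,b) ∈ Y. Let (ξ,v) : I → 𝔰, a : I → X*, b : I → Y*, u : I → 𝔰* be curves on a real interval I such that t ↦ A(ξ(t),v(t)) is differentiable. Then: (i) if u(t) = −K(δŨ/δa(a(t),b(t)), a(t)) − M(δŨ/δb(a(t),b(t)), b(t)), then at every t the controlled Euler–Poincaré momentum equation d/dt[A(ξ,v)] = ad*_{(ξ,v)}A(ξ,v) − K(δU/δa(a), a) + u(t) holds if and only if the matched Euler–Poincaré momentum equation d/dt[A(ξ,v)] = ad*_{(ξ,v)}A(ξ,v) − K(δU/δa(a) + δŨ/δa(a,b), a) − M(δŨ/δb(a,b), b) holds; (ii) conversely, if both equations hold at some t, then u(t) = −K(δŨ/δa(a(t),b(t)), a(t)) − M(δŨ/δb(a(t),b(t)), b(t)).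 -/
open NormedSpace

/-- **Matching with Additional Variables** (Theorem in Section 4.3 of the paper).
`G × V` is the semidirect product Lie algebra 𝔰 = 𝔤 ⋉ V with bracket `br`; `σ'` and `τ'`
are representations of 𝔰 on `X` and `Y` with momentum maps `K` and `M`; `A` is the flat
map of the kinetic-energy metric; `U : X* → ℝ` is the original potential with functional
derivative `DU`, and `U' : X* × Y* → ℝ` is the additional potential with partial
functional derivatives `DUa`, `DUb`; `adStar` is the coadjoint action of 𝔰 on 𝔰*. -/
theorem matching_with_additional_variables
    {G V X Y : Type*}
    [NormedAddCommGroup G] [NormedSpace ℝ G] [FiniteDimensional ℝ G]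
    [LieRing G] [LieAlgebra ℝ G]
    [NormedAddCommGroup V] [NormedSpace ℝ V] [FiniteDimensional ℝ V]
    [NormedAddCommGroup X] [NormedSpace ℝ X] [FiniteDimensional ℝ X]
    [NormedAddCommGroup Y] [NormedSpace ℝ Y] [FiniteDimensional ℝ Y]
    -- ρ' : 𝔤 → End(V) is a Lie algebra homomorphism
    (ρ' : G →ₗ[ℝ] V →ₗ[ℝ] V)
    (hρ' : ∀ ξ η : G, ρ' ⁅ξ, η⁆ = ρ' ξ ∘ₗ ρ' η - ρ' η ∘ₗ ρ' ξ)
    -- the semidirect product bracket on 𝔰 = 𝔤 ⋉ V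
    (br : (G × V) → (G × V) → (G × V))
    (hbr : ∀ s₁ s₂ : G × V, br s₁ s₂ = (⁅s₁.1, s₂.1⁆, ρ' s₁.1 s₂.2 - ρ' s₂.1 s₁.2))
    -- the coadjoint action ⟨ad*_{(ξ,v)}μ, (η,w)⟩ = ⟨μ, [(ξ,v),(η,w)]⟩
    (adStar : (G × V) → StrongDual ℝ (G × V) → StrongDual ℝ (G × V))
    (hadStar : ∀ s μ t, adStar s μ t = μ (br s t))
    -- σ' : 𝔰 → End(X) is a Lie algebra homomorphism, with momentum map K
    (σ' : (G × V) →ₗ[ℝ] X →ₗ[ℝ] X)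
    (hσ' : ∀ s₁ s₂ : G × V, σ' (br s₁ s₂) = σ' s₁ ∘ₗ σ' s₂ - σ' s₂ ∘ₗ σ' s₁)
    (K : X → StrongDual ℝ X → StrongDual ℝ (G × V))
    (hK : ∀ x a s, K x a s = a (σ' s x))
    -- τ' : 𝔰 → End(Y) is a Lie algebra homomorphism, with momentum map M
    (τ' : (G × V) →ₗ[ℝ] Y →ₗ[ℝ] Y)
    (hτ' : ∀ s₁ s₂ : G × V, τ' (br s₁ s₂) = τ' s₁ ∘ₗ τ' s₂ - τ' s₂ ∘ₗ τ' s₁)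
    (M : Y → StrongDual ℝ Y → StrongDual ℝ (G × V))
    (hM : ∀ y b s, M y b s = b (τ' s y))
    -- the flat map of the left-invariant kinetic-energy metric
    (A : (G × V) →ₗ[ℝ] StrongDual ℝ (G × V))
    -- potentials and their (partial) functional derivatives
    (U : StrongDual ℝ X → ℝ) (DU : StrongDual ℝ X → X)
    (hU : ∀ a, HasFDerivAt U (inclusionInDoubleDual ℝ X (DU a)) a)
    (U' : StrongDual ℝ X × StrongDual ℝ Y → ℝ)
    (DUa : StrongDual ℝ X × StrongDual ℝ Y → X) (DUb : StrongDual ℝ X × StrongDual ℝ Y → Y)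
    (hU' : ∀ p : StrongDual ℝ X × StrongDual ℝ Y,
      HasFDerivAt U'
        ((inclusionInDoubleDual ℝ X (DUa p)).comp
            (ContinuousLinearMap.fst ℝ (StrongDual ℝ X) (StrongDual ℝ Y)) +
          (inclusionInDoubleDual ℝ Y (DUb p)).comp
            (ContinuousLinearMap.snd ℝ (StrongDual ℝ X) (StrongDual ℝ Y))) p)
    -- curves on a real interval I
    (I : Set ℝ) (hI : I.OrdConnected)
    (ξv : ℝ → G × V) (a : ℝ → StrongDual ℝ X) (b : ℝ → StrongDual ℝ Y)
    (u : ℝ → StrongDual ℝ (G × V)) (dA : ℝ → StrongDual ℝ (G × V))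
    (hdA : ∀ t ∈ I, HasDerivAt (fun τ => A (ξv τ)) (dA t) t) :
    -- (i): under the matching control, the controlled EP momentum equation holds
    --      iff the matched EP momentum equation holds
    ((∀ t ∈ I, u t = -K (DUa (a t, b t)) (a t) - M (DUb (a t, b t)) (b t)) →
      ∀ t ∈ I,
        (dA t = adStar (ξv t) (A (ξv t)) - K (DU (a t)) (a t) + u t ↔
          dA t = adStar (ξv t) (A (ξv t))
            - K (DU (a t) + DUa (a t, b t)) (a t) - M (DUb (a t, b t)) (b t)))
    ∧
    -- (ii): conversely, if both equations hold at some t, the control is the matching one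
    (∀ t ∈ I,
      dA t = adStar (ξv t) (A (ξv t)) - K (DU (a t)) (a t) + u t →
      dA t = adStar (ξv t) (A (ξv t))
        - K (DU (a t) + DUa (a t, b t)) (a t) - M (DUb (a t, b t)) (b t) →
      u t = -K (DUa (a t, b t)) (a t) - M (DUb (a t, b t)) (b t)) := by
  have hKadd : ∀ (x x' : X) (c : StrongDual ℝ X), K (x + x') c = K x c + K x' c := by
    intro x x' c
    ext s <;>
      simp [hK, map_add, ContinuousLinearMap.comp_apply, ContinuousLinearMap.add_apply]
  constructor
  · intro hu t ht
    rw [hu t ht, hKadd]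
    constructor
    · intro h; rw [h]; abel
    · intro h; rw [h]; abel
  · intro t ht h1 h2
    rw [hKadd] at h2
    rw [h1] at h2
    have : u t = (adStar (ξv t) (A (ξv t)) - (K (DU (a t)) (a t) + K (DUa (a t, b t)) (a t)) -
        M (DUb (a t, b t)) (b t)) - (adStar (ξv t) (A (ξv t)) - K (DU (a t)) (a t)) := by
      rw [← h2]; abel
    rw [this]; abel
end

section
/- Let I ⊆ ℝ be an interval, J, D, M fixed real 3×3 matrices, m̄, m, g, l ∈ ℝ, χ ∈ ℝ³, and let Ω, v, Γ, h be differentiable curves on I with values in ℝ³, ℝ³, ℝ³, ℝ respectively. Set Π := JΩ + Dv and P := DᵀΩ + Mv, and suppose the controlled heavy-top-on-a-movable-base equations hold: Π' = Π × Ω + P × v − m g l χ × Γ, P' = P × Ω − m̄ g Γ + u, Γ' = Γ × Ω, h' = Γ·v, with control u(t) = m̄ g Γ(t) for all t ∈ I. Then P' = P × Ω on I, i.e. (Π, P, Γ) solves the reduced Euler–Poincaré system Π' = Π × Ω + P × v − m g l χ × Γ, P' = P × Ω, Γ' = Γ × Ω; moreover the functions t ↦ ‖P(t)‖², t ↦ P(t)·Γ(t),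 and t ↦ ‖Γ(t)‖² are constant on I. -/
open Matrix

infixl:74 " ×₃ " => crossProduct


private lemma const_of_deriv_zero {I : Set ℝ} (hI : I.OrdConnected) {f : ℝ → ℝ}
    (hf : ∀ t ∈ I, HasDerivAt f 0 t) : ∀ s ∈ I, ∀ t ∈ I, f s = f t := by
  have key : ∀ a ∈ I, ∀ b ∈ I, a ≤ b → f b = f a := by
    intro a ha b hb hab
    have hsub : Set.Icc a b ⊆ I := hI.out ha hb
    exact constant_of_has_deriv_right_zero
      (fun x hx => ((hf x (hsub hx)).continuousAt).continuousWithinAt)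
      (fun x hx => ((hf x (hsub (Set.Ico_subset_Icc_self hx))).hasDerivWithinAt))
      b (Set.right_mem_Icc.2 hab)
  intro s hs t ht
  rcases le_total s t with h | h
  · exact (key s hs t ht h).symm
  · exact key t ht s hs h

private lemma hasDerivAt_dot {f g : ℝ → Fin 3 → ℝ} {f' g' : Fin 3 → ℝ} {t : ℝ}
    (hf : HasDerivAt f f' t) (hg : HasDerivAt g g' t) :
    HasDerivAt (fun s => f s ⬝ᵥ g s) (f' ⬝ᵥ g t + f t ⬝ᵥ g') t := by
  have hfc := hasDerivAt_pi.1 hf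
  have hgc := hasDerivAt_pi.1 hg
  have : HasDerivAt (fun s => ∑ i, f s i * g s i)
      (∑ i, (f' i * g t i + f t i * g' i)) t :=
    HasDerivAt.fun_sum fun i _ => (hfc i).mul (hgc i)
  simpa [dotProduct, Finset.sum_add_distrib] using this

/-- Potential shaping for the heavy top on a movable base: with the control
u = m̄ g Γ cancelling gravity on the base, the linear-momentum equation becomes
P' = P × Ω, so (Π, P, Γ) solves the reduced Euler–Poincaré system on 𝔰𝔢(3) × (ℝ³)*;
moreover ‖P‖², P·Γ, ‖Γ‖² are conserved. -/
theorem heavy_top_potential_shaping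
    (I : Set ℝ) (hI : I.OrdConnected)
    (J D M : Matrix (Fin 3) (Fin 3) ℝ) (mbar m g l : ℝ) (χ : Fin 3 → ℝ)
    (Ω v Γ : ℝ → Fin 3 → ℝ) (h : ℝ → ℝ)
    -- Ω, v, Γ, h are differentiable curves
    (hΩd : ∀ t ∈ I, DifferentiableAt ℝ Ω t) (hvd : ∀ t ∈ I, DifferentiableAt ℝ v t)
    -- the momenta Π = JΩ + Dv and P = DᵀΩ + Mv
    (Pang P : ℝ → Fin 3 → ℝ)
    (hPangdef : ∀ t, Pang t = J *ᵥ Ω t + D *ᵥ v t)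
    (hPdef : ∀ t, P t = Dᵀ *ᵥ Ω t + M *ᵥ v t)
    -- the control u = m̄ g Γ
    (u : ℝ → Fin 3 → ℝ) (hu : ∀ t ∈ I, u t = (mbar * g) • Γ t)
    -- the controlled heavy-top-on-a-movable-base equations
    (hPang : ∀ t ∈ I,
      HasDerivAt Pang (Pang t ×₃ Ω t + P t ×₃ v t - (m * g * l) • (χ ×₃ Γ t)) t)
    (hP : ∀ t ∈ I,
      HasDerivAt P (P t ×₃ Ω t - (mbar * g) • Γ t + u t) t)
    (hΓ : ∀ t ∈ I, HasDerivAt Γ (Γ t ×₃ Ω t) t)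
    (hh : ∀ t ∈ I, HasDerivAt h (Γ t ⬝ᵥ v t) t) :
    -- the linear-momentum equation reduces to P' = P × Ω ...
    (∀ t ∈ I, HasDerivAt P (P t ×₃ Ω t) t)
    -- ... and ‖P‖² = P ⬝ᵥ P, P·Γ, ‖Γ‖² = Γ ⬝ᵥ Γ are constant on I
    ∧ (∀ s ∈ I, ∀ t ∈ I, P s ⬝ᵥ P s = P t ⬝ᵥ P t)
    ∧ (∀ s ∈ I, ∀ t ∈ I, P s ⬝ᵥ Γ s = P t ⬝ᵥ Γ t)
    ∧ (∀ s ∈ I, ∀ t ∈ I, Γ s ⬝ᵥ Γ s = Γ t ⬝ᵥ Γ t) := by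
  have hP' : ∀ t ∈ I, HasDerivAt P (P t ×₃ Ω t) t := by
    intro t ht
    have := hP t ht
    rw [hu t ht] at this
    simpa using this
  refine ⟨hP', ?_, ?_, ?_⟩
  · refine const_of_deriv_zero hI (fun t ht => ?_)
    have := hasDerivAt_dot (hP' t ht) (hP' t ht)
    simpa [dotProduct_comm (P t ×₃ Ω t)] using this
  · refine const_of_deriv_zero hI (fun t ht => ?_)
    have := hasDerivAt_dot (hP' t ht) (hΓ t ht)
    have hz : (P t ×₃ Ω t) ⬝ᵥ Γ t + P t ⬝ᵥ (Γ t ×₃ Ω t) = 0 := by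
      simp [cross_apply, dotProduct, Fin.sum_univ_three]; ring
    rw [hz] at this
    exact this
  · refine const_of_deriv_zero hI (fun t ht => ?_)
    have := hasDerivAt_dot (hΓ t ht) (hΓ t ht)
    simpa [dotProduct_comm (Γ t ×₃ Ω t)] using this
end

section
/- Let I ⊆ ℝ be an interval, Ω : I → ℝ³, c₁, c₂ : I → ℝ, and let P, Δ₁, Δ₂ : I → ℝ³ be differentiable with P'(t) = P(t) × Ω(t) + c₁(t) Δ₁(t) + c₂(t) Δ₂(t) and Δᵢ'(t) = Δᵢ(t) × Ω(t) for i = 1, 2 and all t ∈ I. Then the function t ↦ P(t)·(Δ₁(t) × Δ₂(t)) is constant on I. In particular, along solutions of the controlled underwater-vehicle drift system with control u₂ = −(𝒦δ)₁Δ₁ − (𝒦δ)₂Δ₂, the quantity P·(Δ₁ × Δ₂) is conserved. -/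
open Matrix

/-- Conservation of the Casimir P·(Δ₁ × Δ₂): if P' = P × Ω + c₁ Δ₁ + c₂ Δ₂ and
Δᵢ' = Δᵢ × Ω (i = 1, 2), then P·(Δ₁ × Δ₂) is constant.  (This is the Casimir of the
controlled underwater-vehicle drift system with control u₂ = −(𝒦δ)₁Δ₁ − (𝒦δ)₂Δ₂,
corresponding to Leonard's Casimir e₃ᵀQRP.) -/
theorem casimir_P_dot_cross_conserved
    (I : Set ℝ) (hI : I.OrdConnected)
    (Ω : ℝ → Fin 3 → ℝ) (c₁ c₂ : ℝ → ℝ)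
    (P Δ₁ Δ₂ : ℝ → Fin 3 → ℝ)
    (hP : ∀ t ∈ I, HasDerivAt P (P t ⨯₃ Ω t + c₁ t • Δ₁ t + c₂ t • Δ₂ t) t)
    (hΔ₁ : ∀ t ∈ I, HasDerivAt Δ₁ (Δ₁ t ⨯₃ Ω t) t)
    (hΔ₂ : ∀ t ∈ I, HasDerivAt Δ₂ (Δ₂ t ⨯₃ Ω t) t) :
    ∀ s ∈ I, ∀ t ∈ I, P s ⬝ᵥ (Δ₁ s ⨯₃ Δ₂ s) = P t ⬝ᵥ (Δ₁ t ⨯₃ Δ₂ t) := by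
  set f : ℝ → ℝ := fun t => P t ⬝ᵥ (Δ₁ t ⨯₃ Δ₂ t) with hf
  have key : ∀ t ∈ I, HasDerivAt f 0 t := by
    intro t ht
    have hp := hasDerivAt_pi.mp (hP t ht)
    have h1 := hasDerivAt_pi.mp (hΔ₁ t ht)
    have h2 := hasDerivAt_pi.mp (hΔ₂ t ht)
    have hfg : f = fun t =>
        P t 0 * (Δ₁ t 1 * Δ₂ t 2 - Δ₁ t 2 * Δ₂ t 1)
        + P t 1 * (Δ₁ t 2 * Δ₂ t 0 - Δ₁ t 0 * Δ₂ t 2)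
        + P t 2 * (Δ₁ t 0 * Δ₂ t 1 - Δ₁ t 1 * Δ₂ t 0) := by
      funext s
      simp [hf, crossProduct, dotProduct, Fin.sum_univ_three]
    rw [hfg]
    have H := (((hp 0).mul (((h1 1).mul (h2 2)).sub ((h1 2).mul (h2 1)))).add
        ((hp 1).mul (((h1 2).mul (h2 0)).sub ((h1 0).mul (h2 2))))).add
        ((hp 2).mul (((h1 0).mul (h2 1)).sub ((h1 1).mul (h2 0))))
    refine H.congr_deriv ?_
    simp [crossProduct, Pi.add_apply, Pi.smul_apply, smul_eq_mul, Matrix.vecHead, Matrix.vecTail, Function.comp]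
    ring
  intro s hs t ht
  have hconv : Convex ℝ I := hI.convex
  have := hconv.norm_image_sub_le_of_norm_hasDerivWithin_le (C := 0)
    (fun x hx => (key x hx).hasDerivWithinAt) (fun x hx => by simp) hs ht
  have h0 : ‖f t - f s‖ ≤ 0 := by simpa using this
  have : f t = f s := by
    have := norm_nonneg (f t - f s)
    have : ‖f t - f s‖ = 0 := le_antisymm h0 this
    simpa [sub_eq_zero] using this
  exact this.symm
end
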